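/- For n ≥ 1, let X_n = { x ∈ [0,1]ⁿ : at most one coordinate x_i lies in {0,1} } (the n-cube with all faces of codimension at least two removed) and let S_n = { x ∈ [0,1]ⁿ : at most one coordinate x_i differs from 1/2 } (the star joining the center (1/2,…,1/2) of the cube to the centers of its 2n facets). Then S_n ⊆ X_n and there is a strong deformation retraction of X_n onto S_n: a continuous map F : X_n × [0,1] → X_n with F(x,0) = x for all x ∈ X_n, F(x,1) ∈ S_n for all x ∈ X_n, and F(s,t) = s for all s ∈ S_n and t ∈ [0,1]. -/
import Mathlib


/-- The `n`-cube `[0,1]ⁿ` with all faces of codimension at least two removed: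
points with at most one coordinate in `{0,1}`. -/
def cubeMinusCodim2 (n : ℕ) : Set (Fin n → ℝ) :=
  {x | (∀ i, x i ∈ Set.Icc (0 : ℝ) 1) ∧
    ∀ i j, x i ∈ ({0, 1} : Set ℝ) → x j ∈ ({0, 1} : Set ℝ) → i = j}

/-- The star `S_n` joining the center of the cube to the centers of its `2n` facets:
points of `[0,1]ⁿ` with at most one coordinate different from `1/2`. -/
def starSet (n : ℕ) : Set (Fin n → ℝ) :=
  {x | (∀ i, x i ∈ Set.Icc (0 : ℝ) 1) ∧
    ∀ i j, x i ≠ 1 / 2 → x j ≠ 1 / 2 → i = j}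

namespace Stmt5Aux

/-- The functions whose pointwise max is the "second largest distance to 1/2". -/
noncomputable def m2aux (n : ℕ) (o : Option (Fin n × Fin n)) (x : Fin n → ℝ) : ℝ :=
  Option.elim o 0 (fun p => if p.1 = p.2 then 0 else min |x p.1 - 1/2| |x p.2 - 1/2|)

/-- Second largest of `|x i - 1/2|`. -/
noncomputable def m2 (n : ℕ) (x : Fin n → ℝ) : ℝ :=
  Finset.univ.sup' Finset.univ_nonempty (fun o => m2aux n o x)

lemma m2_nonneg (n : ℕ) (x : Fin n → ℝ) : 0 ≤ m2 n x :=
  Finset.le_sup' (fun o => m2aux n o x) (Finset.mem_univ none)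

lemma m2_ge (n : ℕ) (x : Fin n → ℝ) {i j : Fin n} (h : i ≠ j) :
    min |x i - 1/2| |x j - 1/2| ≤ m2 n x := by
  have h2 : m2aux n (some (i, j)) x ≤ m2 n x :=
    Finset.le_sup' (fun o => m2aux n o x) (Finset.mem_univ (some (i, j)))
  have h3 : m2aux n (some (i, j)) x = min |x i - 1/2| |x j - 1/2| := by
    simp only [m2aux, Option.elim]
    exact if_neg h
  rwa [h3] at h2

lemma continuous_m2 (n : ℕ) : Continuous (m2 n) := by
  apply Continuous.finset_sup'_apply
  intro o _
  rcases o with _ | p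
  · exact continuous_const
  · show Continuous fun x : Fin n → ℝ =>
      if p.1 = p.2 then (0:ℝ) else min |x p.1 - 1/2| |x p.2 - 1/2|
    split
    · exact continuous_const
    · exact Continuous.min
        ((continuous_sub_right _).comp (continuous_apply p.1)).abs
        ((continuous_sub_right _).comp (continuous_apply p.2)).abs

/-- The homotopy on the ambient space. -/
noncomputable def G (n : ℕ) (x : Fin n → ℝ) (t : ℝ) (i : Fin n) : ℝ :=
  x i - max (-(t * m2 n x)) (min (x i - 1/2) (t * m2 n x))

lemma clamp_zero (s : ℝ) : max (-(0:ℝ)) (min s 0) = 0 := by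
  rcases le_total s 0 with h | h <;> simp [min_eq_left, min_eq_right, h, max_eq_left]

/-- key bound: `s - clamp(s,c)` lies between `min s 0` and `max s 0`. -/
lemma clamp_bounds {c : ℝ} (hc : 0 ≤ c) (s : ℝ) :
    min s 0 ≤ s - max (-c) (min s c) ∧ s - max (-c) (min s c) ≤ max s 0 := by
  rcases le_total s 0 with h | h
  · have h1 : min s c = s := min_eq_left (h.trans hc)
    rw [h1]
    constructor
    · rcases le_total (-c) s with h2 | h2
      · simp [max_eq_right h2, min_le_left]
      · simp only [max_eq_left h2, min_le_iff]
        left; linarith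
    · rcases le_total (-c) s with h2 | h2
      · simp [max_eq_right h2, le_max_right]
      · simp only [max_eq_left h2, le_max_iff]
        right; linarith
  · have h2 : -c ≤ min s c := le_min (by linarith) (by linarith)
    rw [max_eq_right h2]
    constructor
    · rcases le_total s c with h3 | h3
      · simp [min_eq_left h3, min_le_right]
      · simp only [min_eq_right h3, min_le_iff]; right; linarith
    · rcases le_total s c with h3 | h3
      · simp [min_eq_left h3, le_max_right]
      · simp only [min_eq_right h3, le_max_iff]; left; linarith

lemma clamp_abs_le {c : ℝ} (hc : 0 ≤ c) (s : ℝ) :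
    |s - max (-c) (min s c)| ≤ |s| := by
  obtain ⟨h1, h2⟩ := clamp_bounds hc s
  rw [abs_le]
  constructor
  · calc -|s| ≤ min s 0 := by rcases le_total s 0 with h | h <;>
        simp [min_eq_left, min_eq_right, h, abs_of_nonpos, abs_of_nonneg, neg_nonpos.2, h]
    _ ≤ _ := h1
  · refine h2.trans ?_
    rcases le_total s 0 with h | h <;>
      simp [max_eq_left, max_eq_right, h, abs_of_nonpos, abs_of_nonneg, neg_nonneg.2]

lemma clamp_eq_zero_of_abs_le {c s : ℝ} (hc : 0 ≤ c) (h : |s| ≤ c) :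
    s - max (-c) (min s c) = 0 := by
  rw [abs_le] at h
  rw [min_eq_left h.2, max_eq_right h.1, sub_self]

lemma G_mem (n : ℕ) {x : Fin n → ℝ} (hx : x ∈ cubeMinusCodim2 n) {t : ℝ}
    (ht0 : 0 ≤ t) : (fun i => G n x t i) ∈ cubeMinusCodim2 n := by
  obtain ⟨hxI, hxb⟩ := hx
  have hc : 0 ≤ t * m2 n x := mul_nonneg ht0 (m2_nonneg n x)
  have habs : ∀ i, |G n x t i - 1/2| ≤ |x i - 1/2| := by
    intro i
    have h : G n x t i - 1/2
        = (x i - 1/2) - max (-(t * m2 n x)) (min (x i - 1/2) (t * m2 n x)) := by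
      simp only [G]; ring
    rw [h]
    exact clamp_abs_le hc (x i - 1/2)
  have hhalf : ∀ i, |x i - 1/2| ≤ 1/2 := by
    intro i
    obtain ⟨h0, h1⟩ := hxI i
    rw [abs_le]; constructor <;> linarith
  constructor
  · intro i
    have := (habs i).trans (hhalf i)
    rw [abs_le] at this
    constructor <;> [linarith [this.1]; linarith [this.2]]
  · intro i j hi hj
    have key : ∀ k : Fin n, G n x t k ∈ ({0, 1} : Set ℝ) → x k ∈ ({0, 1} : Set ℝ) := by
      intro k hk
      have h2 : |G n x t k - 1/2| = 1/2 := by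
        rcases hk with hk | hk <;> rw [hk] <;> norm_num
      have h3 : |x k - 1/2| = 1/2 := by
        refine le_antisymm (hhalf k) ?_
        calc (1/2 : ℝ) = |G n x t k - 1/2| := h2.symm
          _ ≤ |x k - 1/2| := habs k
      rcases abs_eq (by norm_num : (0:ℝ) ≤ 1/2) |>.mp h3 with h | h
      · right; show x k = 1; linarith
      · left; show x k = 0; linarith
    exact hxb i j (key i hi) (key j hj)

lemma m2_eq_zero_of_star (n : ℕ) {x : Fin n → ℝ} (hx : x ∈ starSet n) : m2 n x = 0 := by
  refine le_antisymm ?_ (m2_nonneg n x)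
  apply Finset.sup'_le
  intro o _
  rcases o with _ | ⟨i, j⟩
  · exact le_refl 0
  · by_cases hij : i = j
    · simp only [m2aux, Option.elim]
      rw [if_pos hij]
    · have hor : x i = 1/2 ∨ x j = 1/2 := by
        by_contra h
        push_neg at h
        exact hij (hx.2 i j h.1 h.2)
      have heq : m2aux n (some (i, j)) x = min |x i - 1/2| |x j - 1/2| := by
        simp only [m2aux, Option.elim]
        exact if_neg hij
      rw [heq]
      rcases hor with h | h
      · calc min |x i - 1/2| |x j - 1/2| ≤ |x i - 1/2| := min_le_left _ _
          _ = 0 := by rw [h]; simp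
      · calc min |x i - 1/2| |x j - 1/2| ≤ |x j - 1/2| := min_le_right _ _
          _ = 0 := by rw [h]; simp

lemma G_self (n : ℕ) (x : Fin n → ℝ) {t : ℝ} (h : t * m2 n x = 0) :
    (fun i => G n x t i) = x := by
  funext i
  simp [G, h, clamp_zero]

end Stmt5Aux

open Stmt5Aux in
/-- Step 3° in the proof of Theorem 3.3: the cube minus its codimension-`≥ 2` faces
strongly deformation retracts onto the star `S_n` with `2n` leaves. -/
theorem stmt5 (n : ℕ) (hn : 1 ≤ n) :
    starSet n ⊆ cubeMinusCodim2 n ∧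
    ∃ F : cubeMinusCodim2 n × unitInterval → cubeMinusCodim2 n,
      Continuous F ∧
      (∀ x, F (x, 0) = x) ∧
      (∀ x, ((F (x, 1) : cubeMinusCodim2 n) : Fin n → ℝ) ∈ starSet n) ∧
      (∀ (s : cubeMinusCodim2 n), (s : Fin n → ℝ) ∈ starSet n →
        ∀ t : unitInterval, F (s, t) = s) := by
  constructor
  · rintro x ⟨hxI, hx⟩
    refine ⟨hxI, fun i j hi hj => hx i j ?_ ?_⟩
    · rcases hi with h | h <;> rw [h] <;> norm_num
    · rcases hj with h | h <;> rw [h] <;> norm_num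
  · refine ⟨fun p => ⟨fun i => G n p.1.val p.2.val i, G_mem n p.1.2 p.2.2.1⟩, ?_, ?_, ?_, ?_⟩
    · apply Continuous.subtype_mk
      apply continuous_pi
      intro i
      have hx : Continuous fun p : cubeMinusCodim2 n × unitInterval => (p.1 : Fin n → ℝ) :=
        continuous_subtype_val.comp continuous_fst
      have hxi : Continuous fun p : cubeMinusCodim2 n × unitInterval => (p.1 : Fin n → ℝ) i :=
        (continuous_apply i).comp hx
      have ht : Continuous fun p : cubeMinusCodim2 n × unitInterval => (p.2 : ℝ) :=
        continuous_subtype_val.comp continuous_snd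
      have hm : Continuous fun p : cubeMinusCodim2 n × unitInterval => m2 n p.1.val :=
        (continuous_m2 n).comp hx
      exact (hxi.sub (((ht.mul hm).neg).max ((hxi.sub continuous_const).min (ht.mul hm))))
    · intro x
      apply Subtype.ext
      exact G_self n x.val (by norm_num)
    · intro x
      set c := m2 n x.val with hc
      have hmem := G_mem n x.2 (t := (1:ℝ)) zero_le_one
      refine ⟨hmem.1, fun i j hi hj => ?_⟩
      have key : ∀ k : Fin n, G n x.val 1 k ≠ 1/2 → c < |x.val k - 1/2| := by
        intro k hk
        by_contra hle
        push_neg at hle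
        apply hk
        have : x.val k - 1/2 - max (-(1 * c)) (min (x.val k - 1/2) (1 * c)) = 0 := by
          rw [one_mul]
          exact clamp_eq_zero_of_abs_le (m2_nonneg n x.val) hle
        simp only [G]
        linarith
      have hi' := key i hi
      have hj' := key j hj
      by_contra hij
      have := m2_ge n x.val hij
      rcases min_le_iff.mp this with h | h
      · exact absurd h (not_le.mpr hi')
      · exact absurd h (not_le.mpr hj')
    · intro s hs t
      apply Subtype.ext
      exact G_self n s.val (by rw [m2_eq_zero_of_star n hs, mul_zero])
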